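/- arXiv:1409.5783 — 2 statements merged into one kernel-verified Lean document; each statement's English description precedes it below -/
import Mathlib

section
/- Let m, x, β be positive reals and α a real number such that m + β·ln m > x + β·ln x + α. Then m > x + α/(1 + β/x). -/
theorem stmt_3 (m x β α : ℝ) (hm : 0 < m) (hx : 0 < x) (hβ : 0 < β)
    (h : m + β * Real.log m > x + β * Real.log x + α) :
    m > x + α / (1 + β / x) := by
  set t := x + α / (1 + β / x) with ht
  rcases le_or_gt t 0 with h0 | h0
  · linarith
  by_contra hc
  push_neg at hc
  have hxβ : 0 < x + β := by linarith
  have ht' : t = x * (1 + α / (x + β)) := by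
    rw [ht]; field_simp
  have hu : 0 < 1 + α / (x + β) := by
    by_contra hu; push_neg at hu
    have h1 : t ≤ 0 := by
      rw [ht']; exact mul_nonpos_of_nonneg_of_nonpos hx.le hu
    linarith
  have hlog : Real.log (1 + α / (x + β)) ≤ α / (x + β) := by
    have := Real.log_le_sub_one_of_pos hu; linarith
  have hlt : Real.log t = Real.log x + Real.log (1 + α / (x + β)) := by
    rw [ht', Real.log_mul (ne_of_gt hx) (ne_of_gt hu)]
  have hxx : x * (1 + α / (x + β)) = x + α * x / (x + β) := by field_simp
  have hA : α * x / (x + β) + β * (α / (x + β)) = α := by field_simp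
  have hft : t + β * Real.log t ≤ x + β * Real.log x + α := by
    rw [hlt, ht', hxx]
    nlinarith [hlog, hβ]
  have hlm : Real.log m ≤ Real.log t := Real.log_le_log hm hc
  nlinarith [mul_le_mul_of_nonneg_left hlm (le_of_lt hβ)]
end

section
/- The function φ(x) = 1 - (1/√(4πx)) ∫_ℝ tanh(u/2) · exp(-(u - x)²/(4x)) du, defined for x > 0 with φ(0) = 1, satisfies 0 < φ(x) < 1 for all x > 0. -/
open MeasureTheory

noncomputable def phi (x : ℝ) : ℝ :=
  if x = 0 then 1
  else 1 - (1 / Real.sqrt (4 * Real.pi * x)) *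
    ∫ u : ℝ, Real.tanh (u / 2) * Real.exp (-(u - x) ^ 2 / (4 * x))

lemma abs_tanh_lt_one (t : ℝ) : |Real.tanh t| < 1 := by
  rw [Real.tanh_eq_sinh_div_cosh, abs_div, abs_of_pos (Real.cosh_pos t),
    div_lt_one (Real.cosh_pos t), abs_lt]
  constructor
  · nlinarith [Real.cosh_add_sinh t, Real.exp_pos t]
  · nlinarith [Real.cosh_sub_sinh t, Real.exp_pos (-t)]

lemma tanh_pos {t : ℝ} (ht : 0 < t) : 0 < Real.tanh t := by
  rw [Real.tanh_eq_sinh_div_cosh]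
  exact div_pos (by positivity) (Real.cosh_pos t)

theorem stmt_8 (x : ℝ) (hx : 0 < x) : 0 < phi x ∧ phi x < 1 := by
  have hb : (0 : ℝ) < 1 / (4 * x) := by positivity
  set b : ℝ := 1 / (4 * x) with hbdef
  set g : ℝ → ℝ := fun u => Real.exp (-b * u ^ 2) with hgdef
  have hexp : ∀ u : ℝ, Real.exp (-(u - x) ^ 2 / (4 * x)) = g (u - x) := by
    intro u
    have : -(u - x) ^ 2 / (4 * x) = -b * (u - x) ^ 2 := by
      rw [hbdef]; field_simp
    rw [this]
  have hgint : Integrable g := integrable_exp_neg_mul_sq hb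
  have hgx_int : Integrable (fun u => g (u - x)) := hgint.comp_sub_right x
  have hgcont : Continuous g := by fun_prop
  -- integrability of the main integrand
  have htanh_cont : Continuous Real.tanh := by
    have heq : Real.tanh = fun t => Real.sinh t / Real.cosh t :=
      funext fun t => Real.tanh_eq_sinh_div_cosh t
    rw [heq]
    exact Real.continuous_sinh.div Real.continuous_cosh fun t => (Real.cosh_pos t).ne'
  have htanh_meas : AEStronglyMeasurable (fun u : ℝ => Real.tanh (u / 2)) volume :=
    (htanh_cont.comp (continuous_id.div_const 2)).aestronglyMeasurable
  have hint : Integrable (fun u => Real.tanh (u / 2) * g (u - x)) := by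
    apply hgx_int.bdd_mul (c := 1) htanh_meas
    exact Filter.Eventually.of_forall fun u => le_of_lt (by simpa using abs_tanh_lt_one (u / 2))
  have hgpos : ∀ u : ℝ, 0 < g u := fun u => Real.exp_pos _
  -- value of the Gaussian integral
  have hsqrt_pos : (0 : ℝ) < Real.sqrt (4 * Real.pi * x) := by
    apply Real.sqrt_pos.mpr; positivity
  have hJ : (∫ u : ℝ, g (u - x)) = Real.sqrt (4 * Real.pi * x) := by
    rw [integral_sub_right_eq_self g x, hgdef, integral_gaussian]
    congr 1
    rw [hbdef]; field_simp
  -- I : the main integral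
  set I : ℝ := ∫ u : ℝ, Real.tanh (u / 2) * g (u - x) with hIdef
  -- Positivity of I via symmetrization
  have hIneg : I = ∫ u : ℝ, Real.tanh (-u / 2) * g (-u - x) := by
    rw [hIdef, ← integral_neg_eq_self (fun u => Real.tanh (u / 2) * g (u - x)) volume]
  have hint2 : Integrable (fun u : ℝ => Real.tanh (-u / 2) * g (-u - x)) := by
    simpa using hint.comp_neg
  have h2I : 2 * I = ∫ u : ℝ,
      (Real.tanh (u / 2) * g (u - x) + Real.tanh (-u / 2) * g (-u - x)) := by
    rw [integral_add hint hint2, ← hIdef, ← hIneg]; ring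
  set k : ℝ → ℝ := fun u =>
    Real.tanh (u / 2) * g (u - x) + Real.tanh (-u / 2) * g (-u - x) with hkdef
  have hkeq : ∀ u : ℝ, k u = Real.tanh (u / 2) * (g (u - x) - g (-u - x)) := by
    intro u
    simp only [hkdef, Real.tanh_neg, neg_div]
    ring
  have hkpos : ∀ u : ℝ, u ≠ 0 → 0 < k u := by
    intro u hu
    rcases lt_or_gt_of_ne hu with h | h
    · rw [hkeq]
      have h1 : Real.tanh (u / 2) < 0 := by
        have := tanh_pos (t := -u / 2) (by linarith)
        rw [neg_div, Real.tanh_neg] at this; linarith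
      have h2 : g (u - x) < g (-u - x) := by
        apply Real.exp_lt_exp.mpr
        nlinarith [mul_pos (mul_pos hb hx) (neg_pos.mpr h)]
      nlinarith
    · rw [hkeq]
      have h1 : 0 < Real.tanh (u / 2) := tanh_pos (by linarith)
      have h2 : g (-u - x) < g (u - x) := by
        apply Real.exp_lt_exp.mpr
        nlinarith [mul_pos (mul_pos hb hx) h]
      nlinarith
  have hknonneg : ∀ u : ℝ, 0 ≤ k u := by
    intro u
    rcases eq_or_ne u 0 with h | h
    · simp [hkdef, h]
    · exact le_of_lt (hkpos u h)
  have hkint : Integrable k := hint.add hint2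
  have hIpos : 0 < I := by
    have : 0 < ∫ u : ℝ, k u := by
      rw [integral_pos_iff_support_of_nonneg hknonneg hkint]
      have hsub : Set.Ioi (0 : ℝ) ⊆ Function.support k := by
        intro u hu
        exact (hkpos u (ne_of_gt hu)).ne'
      calc (0 : ENNReal) < volume (Set.Ioi (0 : ℝ)) := by simp
        _ ≤ volume (Function.support k) := measure_mono hsub
    rw [← h2I] at this; linarith
  -- Upper bound: I < J
  have hIJ : I < Real.sqrt (4 * Real.pi * x) := by
    rw [← hJ]
    have hdiff : 0 < ∫ u : ℝ, (g (u - x) - Real.tanh (u / 2) * g (u - x)) := by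
      have hnonneg : ∀ u : ℝ, 0 ≤ g (u - x) - Real.tanh (u / 2) * g (u - x) := by
        intro u
        have h1 : Real.tanh (u / 2) < 1 := (abs_lt.mp (abs_tanh_lt_one (u / 2))).2
        nlinarith [hgpos (u - x)]
      have hintd : Integrable (fun u => g (u - x) - Real.tanh (u / 2) * g (u - x)) :=
        hgx_int.sub hint
      rw [integral_pos_iff_support_of_nonneg hnonneg hintd]
      have hsub : Set.univ ⊆ Function.support
          (fun u => g (u - x) - Real.tanh (u / 2) * g (u - x)) := by
        intro u _
        have h1 : Real.tanh (u / 2) < 1 := (abs_lt.mp (abs_tanh_lt_one (u / 2))).2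
        have : 0 < g (u - x) - Real.tanh (u / 2) * g (u - x) := by
          nlinarith [hgpos (u - x)]
        exact this.ne'
      calc (0 : ENNReal) < volume (Set.univ : Set ℝ) := by simp
        _ ≤ volume (Function.support _) := measure_mono hsub
    rw [integral_sub hgx_int hint, ← hIdef] at hdiff
    linarith
  -- conclude
  have hphival : phi x = 1 - (1 / Real.sqrt (4 * Real.pi * x)) * I := by
    rw [phi, if_neg (ne_of_gt hx), hIdef]
    congr 1
    congr 1
    congr 1
    funext u
    rw [hexp u]
  rw [hphival]
  constructor
  · have : (1 / Real.sqrt (4 * Real.pi * x)) * I < 1 := by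
      rw [div_mul_eq_mul_div, one_mul, div_lt_one hsqrt_pos]
      exact hIJ
    linarith
  · have : 0 < (1 / Real.sqrt (4 * Real.pi * x)) * I := by positivity
    linarith
end
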